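/- With C_i^k = Ψ_i(Cᵏ) as above, if A ∈ 𝒞_u and B ∈ 𝒞_v with u > v (where 𝒞_m = {C_i^k : |i|+k = m}), then either A ∩ B = ∅ or A ⊆ B. -/

import Mathlib

noncomputable section

open Set Metric MeasureTheory

/-- Distance between two sets. -/
def setDist {X : Type*} [MetricSpace X] (A B : Set X) : ℝ := sInf (Set.image2 dist A B)

/-- Lipschitz equivalence of two sets: a bi-Lipschitz bijection between them. -/
def LipEquivOn {X Y : Type*} [MetricSpace X] [MetricSpace Y] (E : Set X) (F : Set Y) : Prop :=
  ∃ (f : X → Y) (c c' : ℝ), 0 < c ∧ c ≤ c' ∧ Set.BijOn f E F ∧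
    ∀ x ∈ E, ∀ y ∈ E, c * dist x y ≤ dist (f x) (f y) ∧ dist (f x) (f y) ≤ c' * dist x y

/-- The affine contraction `x ↦ ρ i * x + t i`. -/
def affMap (r t : ℕ → ℝ) (i : ℕ) (x : ℝ) : ℝ := r i * x + t i

/-- Composition of the affine maps along a word (first letter outermost). -/
def affWord (r t : ℕ → ℝ) : List ℕ → ℝ → ℝ
  | [] => id
  | i :: w => affMap r t i ∘ affWord r t w

/-- Cylinder of a general IFS for a word over `Fin n`. -/
def cylW {X : Type*} {n : ℕ} (Ψ : Fin n → X → X) (F : Set X) (w : List (Fin n)) : Set X :=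
  (w.foldr (fun i g => Ψ i ∘ g) id) '' F

/-- A (separable) contraction vector `(ρ 0, …, ρ (n-1))` in `ℝ`. -/
structure ContractionVec (n : ℕ) (ρ : ℕ → ℝ) : Prop where
  three_le : 3 ≤ n
  pos : ∀ i, i < n → 0 < ρ i
  lt_one : ∀ i, i < n → ρ i < 1
  sum_lt : (∑ i ∈ Finset.range n, ρ i) < 1

/-- The touching IFS of the standing setup, together with its attractor `T`. -/
structure TouchingIFS (n : ℕ) (ρ : ℕ → ℝ) where
  t : ℕ → ℝ
  T : Set ℝ
  order : ∀ i, i + 1 < n → affMap ρ t i 1 ≤ affMap ρ t (i + 1) 0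
  left0 : affMap ρ t 0 0 = 0
  right1 : affMap ρ t (n - 1) 1 = 1
  touch_ex : ∃ i, i + 1 < n ∧ affMap ρ t i 1 = affMap ρ t (i + 1) 0
  compactT : IsCompact T
  nonemptyT : T.Nonempty
  invT : T = ⋃ i ∈ Finset.range n, affMap ρ t i '' T

/-- The dust-like, equally spaced IFS of the standing setup, with attractor `D`. -/
structure DustIFS (n : ℕ) (ρ : ℕ → ℝ) where
  d : ℕ → ℝ
  D : Set ℝ
  left0 : affMap ρ d 0 0 = 0
  right1 : affMap ρ d (n - 1) 1 = 1
  equal_gap : ∀ i, i + 1 < n →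
    affMap ρ d (i + 1) 0 - affMap ρ d i 1 = (1 - ∑ j ∈ Finset.range n, ρ j) / (n - 1)
  compactD : IsCompact D
  nonemptyD : D.Nonempty
  invD : D = ⋃ i ∈ Finset.range n, affMap ρ d i '' D

variable {n : ℕ} {ρ : ℕ → ℝ}

/-- Cylinder `T_w`. -/
def TouchingIFS.cyl (S : TouchingIFS n ρ) (w : List ℕ) : Set ℝ := affWord ρ S.t w '' S.T

/-- `i` is a (left) touching letter. -/
def TouchingIFS.touch (S : TouchingIFS n ρ) (i : ℕ) : Prop :=
  i + 1 < n ∧ affMap ρ S.t i 1 = affMap ρ S.t (i + 1) 0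

/-- Left touching patch `L_k(T_w)` (with `α` the initial touching run length). -/
def TouchingIFS.patchL (S : TouchingIFS n ρ) (α : ℕ) (w : List ℕ) (k : ℕ) : Set ℝ :=
  ⋃ j ∈ Finset.range α, S.cyl (w ++ List.replicate k 0 ++ [j])

/-- Right touching patch `R_k(T_w)` (with `β` the final touching run length). -/
def TouchingIFS.patchR (S : TouchingIFS n ρ) (β : ℕ) (w : List ℕ) (k : ℕ) : Set ℝ :=
  ⋃ j ∈ Finset.Ico (n - β) n, S.cyl (w ++ List.replicate k (n - 1) ++ [j])

/-- `α` is the number of successive touching intervals at the beginning. -/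
def TouchingIFS.alphaRun (S : TouchingIFS n ρ) (α : ℕ) : Prop :=
  1 ≤ α ∧ α < n ∧ (∀ i, i + 1 < α → S.touch i) ∧ ¬ S.touch (α - 1)

/-- `β` is the number of successive touching intervals at the end. -/
def TouchingIFS.betaRun (S : TouchingIFS n ρ) (β : ℕ) : Prop :=
  1 ≤ β ∧ β < n ∧ (∀ i, n - β ≤ i → i + 1 < n → S.touch i) ∧ ¬ S.touch (n - β - 1)

/-- Cylinder `D_w`. -/
def DustIFS.cyl (Q : DustIFS n ρ) (w : List ℕ) : Set ℝ := affWord ρ Q.d w '' Q.D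

/-- Left patch `L_k(D_w)`. -/
def DustIFS.patchL (Q : DustIFS n ρ) (α : ℕ) (w : List ℕ) (k : ℕ) : Set ℝ :=
  ⋃ j ∈ Finset.range α, Q.cyl (w ++ List.replicate k 0 ++ [j])

/-- Right patch `R_k(D_w)`. -/
def DustIFS.patchR (Q : DustIFS n ρ) (β : ℕ) (w : List ℕ) (k : ℕ) : Set ℝ :=
  ⋃ j ∈ Finset.Ico (n - β) n, Q.cyl (w ++ List.replicate k (n - 1) ++ [j])

/-- `τ k` is the unique positive integer with `ρₙᵏ ρ₁ < ρ₁ ^ τ(k) ≤ ρₙᵏ`. -/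
def tauSpec (ρ : ℕ → ℝ) (n : ℕ) (τ : ℕ → ℕ) : Prop :=
  ∀ k, 1 ≤ k → 1 ≤ τ k ∧ ρ (n - 1) ^ k * ρ 0 < ρ 0 ^ τ k ∧ ρ 0 ^ τ k ≤ ρ (n - 1) ^ k

/-- `Cᵏ = R_k(T_{i₀}) ∪ L_{τ(k)}(T_{i₀+1})`. -/
def Cset (S : TouchingIFS n ρ) (α β i₀ : ℕ) (τ : ℕ → ℕ) (k : ℕ) : Set ℝ :=
  S.patchR β [i₀] k ∪ S.patchL α [i₀ + 1] (τ k)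

/-- The touching letter `i` is left substitutable. -/
def TouchingIFS.LeftSub (S : TouchingIFS n ρ) (α : ℕ) (i : ℕ) : Prop :=
  ∃ (w : List ℕ) (a : ℕ) (k k' : ℕ), (∀ b ∈ w ++ [a], b < n) ∧
    Metric.diam (S.patchL α [i + 1] k) = Metric.diam (S.patchL α (i :: (w ++ [a])) k') ∧
    a ≠ 0 ∧ ∀ ℓ, S.touch ℓ → a ≠ ℓ + 1

/-- The touching letter `i` is right substitutable. -/
def TouchingIFS.RightSub (S : TouchingIFS n ρ) (β : ℕ) (i : ℕ) : Prop :=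
  ∃ (w : List ℕ) (a : ℕ) (k k' : ℕ), (∀ b ∈ w ++ [a], b < n) ∧
    Metric.diam (S.patchR β [i] k) = Metric.diam (S.patchR β ((i + 1) :: (w ++ [a])) k') ∧
    a ≠ n - 1 ∧ ¬ S.touch a

/-- Convex hull of a bounded set of reals: the minimal closed interval containing it. -/
def CH (B : Set ℝ) : Set ℝ := Set.Icc (sInf B) (sSup B)

/-- `[a,b]` is a maximal run of touching letters (a first-level connected component). -/
def TouchingIFS.run (S : TouchingIFS n ρ) (a b : ℕ) : Prop :=
  a ≤ b ∧ b < n ∧ (∀ i, a ≤ i → i < b → S.touch i) ∧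
  (a = 0 ∨ ¬ S.touch (a - 1)) ∧ (b = n - 1 ∨ ¬ S.touch b)

/-- Membership in the class `𝒯⁽¹⁾`: a `T`-separate copy `Ψ_w(T⁽¹⁾_j)`. -/
def TouchingIFS.T1mem (S : TouchingIFS n ρ) (X : Set ℝ) : Prop :=
  ∃ (w : List ℕ) (a b : ℕ), (∀ c ∈ w, c < n) ∧ S.run a b ∧
    X = affWord ρ S.t w '' (⋃ j ∈ Finset.Icc a b, S.cyl [j]) ∧
    0 < setDist X (S.T \ X)

/-- Membership in the class `𝒯⁽²⁾`: a copy `Ψ_w(T⁽²⁾_i) = Ψ_w(R₀(T_i) ∪ L₀(T_{i+1}))`. -/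
def TouchingIFS.T2mem (S : TouchingIFS n ρ) (α β : ℕ) (X : Set ℝ) : Prop :=
  ∃ (w : List ℕ) (i : ℕ), (∀ c ∈ w, c < n) ∧ S.touch i ∧
    X = affWord ρ S.t w '' (S.patchR β [i] 0 ∪ S.patchL α [i + 1] 0)

/-- An admissible family for the simple decomposition of `E` by the `A i`. -/
def GoodFam (E : Set ℝ) {k : ℕ} (A : Fin k → Set ℝ) (𝒮 : Finset (Set ℝ)) : Prop :=
  (∀ B ∈ 𝒮, IsCompact B ∧ B ⊆ E) ∧ (⋃ B ∈ 𝒮, B) = E ∧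
  (∀ B ∈ 𝒮, ∀ B' ∈ 𝒮, B ≠ B' → CH B ∩ CH B' = ∅) ∧ (∀ i, A i ∈ 𝒮)
namespace CsetAux

variable {n : ℕ} {ρ : ℕ → ℝ}

section Basic
variable (hρ : ContractionVec n ρ) (S : TouchingIFS n ρ)
include hρ

lemma rpos {a : ℕ} (ha : a < n) : 0 < ρ a := hρ.pos a ha

lemma aff_lt {a : ℕ} (ha : a < n) {x y : ℝ} (h : x < y) :
    affMap ρ S.t a x < affMap ρ S.t a y := by
  unfold affMap
  have := hρ.pos a ha
  nlinarith

lemma aff_le {a : ℕ} (ha : a < n) {x y : ℝ} (h : x ≤ y) :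
    affMap ρ S.t a x ≤ affMap ρ S.t a y := by
  unfold affMap
  have := hρ.pos a ha
  nlinarith

lemma aff_strictMono {a : ℕ} (ha : a < n) : StrictMono (affMap ρ S.t a) :=
  fun _ _ h => aff_lt hρ S ha h

/-- chain inequality: right end of interval `a` is left of left end of interval `b`. -/
lemma chain {a b : ℕ} (hab : a < b) (hb : b < n) :
    affMap ρ S.t a 1 ≤ affMap ρ S.t b 0 := by
  induction b with
  | zero => omega
  | succ c ih =>
    rcases Nat.lt_or_ge a c with h | h
    · have h1 := ih (by omega) (by omega)
      have h2 : affMap ρ S.t c 0 ≤ affMap ρ S.t c 1 := aff_le hρ S (by omega) zero_le_one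
      have h3 := S.order c hb
      linarith
    · have : a = c := by omega
      subst this
      exact S.order a hb

lemma chain_far {a b : ℕ} (hab : a + 1 < b) (hb : b < n) :
    affMap ρ S.t a 1 < affMap ρ S.t b 0 := by
  have h1 : affMap ρ S.t a 1 ≤ affMap ρ S.t (a+1) 0 := chain hρ S (by omega) (by omega)
  have h2 : affMap ρ S.t (a+1) 0 < affMap ρ S.t (a+1) 1 := aff_lt hρ S (by omega) one_pos
  have h3 : affMap ρ S.t (a+1) 1 ≤ affMap ρ S.t b 0 := chain hρ S (by omega) hb
  linarith

lemma e_nonneg {a : ℕ} (ha : a < n) : 0 ≤ affMap ρ S.t a 0 := by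
  rcases Nat.eq_zero_or_pos a with rfl | h
  · exact le_of_eq S.left0.symm
  · have h1 : affMap ρ S.t 0 0 ≤ affMap ρ S.t 0 1 := aff_le hρ S (by omega) zero_le_one
    have h2 : affMap ρ S.t 0 1 ≤ affMap ρ S.t a 0 := chain hρ S h ha
    have := S.left0
    linarith

lemma f_le_one {a : ℕ} (ha : a < n) : affMap ρ S.t a 1 ≤ 1 := by
  rcases Nat.lt_or_ge a (n-1) with h | h
  · have h2 : affMap ρ S.t a 1 ≤ affMap ρ S.t (n-1) 0 := chain hρ S h (by omega)
    have h3 : affMap ρ S.t (n-1) 0 ≤ affMap ρ S.t (n-1) 1 := aff_le hρ S (by omega) zero_le_one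
    have := S.right1
    linarith
  · have : a = n - 1 := by omega
    subst this
    exact le_of_eq S.right1

lemma e_lt_f {a : ℕ} (ha : a < n) : affMap ρ S.t a 0 < affMap ρ S.t a 1 :=
  aff_lt hρ S ha one_pos

/-- `T ⊆ [0,1]`. -/
lemma T_sub : S.T ⊆ Set.Icc 0 1 := by
  have hBdd : BddAbove S.T := S.compactT.bddAbove
  have hBdd' : BddBelow S.T := S.compactT.bddBelow
  have hM : sSup S.T ∈ S.T := S.compactT.sSup_mem S.nonemptyT
  have hm : sInf S.T ∈ S.T := S.compactT.sInf_mem S.nonemptyT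
  have hM1 : sSup S.T ≤ 1 := by
    have this : sSup S.T ∈ ⋃ i ∈ Finset.range n, affMap ρ S.t i '' S.T := by
      rw [← S.invT]; exact hM
    simp only [Set.mem_iUnion] at this
    obtain ⟨a, ha, x, hx, hfx⟩ := this
    simp only [Finset.mem_range] at ha
    have hxM : x ≤ sSup S.T := le_csSup hBdd hx
    have h1 : sSup S.T ≤ ρ a * sSup S.T + S.t a := by
      have heq : ρ a * x + S.t a = sSup S.T := hfx
      have := hρ.pos a ha
      nlinarith
    have h2 : S.t a ≤ 1 - ρ a := by
      have := f_le_one hρ S ha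
      unfold affMap at this; linarith
    have h3 : 0 < 1 - ρ a := by have := hρ.lt_one a ha; linarith
    nlinarith
  have hm0 : 0 ≤ sInf S.T := by
    have this : sInf S.T ∈ ⋃ i ∈ Finset.range n, affMap ρ S.t i '' S.T := by
      rw [← S.invT]; exact hm
    simp only [Set.mem_iUnion] at this
    obtain ⟨a, ha, x, hx, hfx⟩ := this
    simp only [Finset.mem_range] at ha
    have hxm : sInf S.T ≤ x := csInf_le hBdd' hx
    have h1 : ρ a * sInf S.T + S.t a ≤ sInf S.T := by
      have : ρ a * x + S.t a = sInf S.T := hfx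
      have := hρ.pos a ha
      nlinarith
    have h2 : 0 ≤ S.t a := by have := e_nonneg hρ S ha; unfold affMap at this; linarith
    have h3 : 0 < 1 - ρ a := by have := hρ.lt_one a ha; linarith
    nlinarith
  intro x hx
  exact ⟨le_trans hm0 (csInf_le hBdd' hx), le_trans (le_csSup hBdd hx) hM1⟩

end Basic
end CsetAux
namespace CsetAux
section Words
variable {n : ℕ} {ρ : ℕ → ℝ} (hρ : ContractionVec n ρ) (S : TouchingIFS n ρ)

lemma affWord_nil (x : ℝ) : affWord ρ S.t [] x = x := rfl

lemma affWord_cons (a : ℕ) (w : List ℕ) (x : ℝ) :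
    affWord ρ S.t (a :: w) x = affMap ρ S.t a (affWord ρ S.t w x) := rfl

lemma affWord_append (u v : List ℕ) (x : ℝ) :
    affWord ρ S.t (u ++ v) x = affWord ρ S.t u (affWord ρ S.t v x) := by
  induction u with
  | nil => rfl
  | cons a u ih => simp [affWord_cons, ih]

lemma image_cons (a : ℕ) (w : List ℕ) (X : Set ℝ) :
    affWord ρ S.t (a :: w) '' X = affMap ρ S.t a '' (affWord ρ S.t w '' X) := by
  rw [← Set.image_comp]; rfl

include hρ

lemma affWord_strictMono {w : List ℕ} (hw : ∀ a ∈ w, a < n) :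
    StrictMono (affWord ρ S.t w) := by
  induction w with
  | nil => exact fun x y h => h
  | cons a w ih =>
    intro x y h
    exact aff_lt hρ S (hw a (by simp)) (ih (fun b hb => hw b (by simp [hb])) h)

lemma affWord_le {w : List ℕ} (hw : ∀ a ∈ w, a < n) {x y : ℝ} (h : x ≤ y) :
    affWord ρ S.t w x ≤ affWord ρ S.t w y := by
  rcases eq_or_lt_of_le h with rfl | h
  · exact le_rfl
  · exact le_of_lt (affWord_strictMono hρ S hw h)

lemma aff_T_sub {a : ℕ} (ha : a < n) : affMap ρ S.t a '' S.T ⊆ S.T := by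
  intro y hy
  rw [S.invT]
  exact Set.mem_biUnion (Finset.mem_range.mpr ha) hy

lemma word_T_sub {w : List ℕ} (hw : ∀ a ∈ w, a < n) : affWord ρ S.t w '' S.T ⊆ S.T := by
  induction w with
  | nil => simp [affWord]
  | cons a w ih =>
    rw [image_cons]
    exact subset_trans (Set.image_mono (ih (fun b hb => hw b (by simp [hb]))))
      (aff_T_sub hρ S (hw a (by simp)))

lemma aff_Ioo {a : ℕ} (ha : a < n) {X : Set ℝ} (hX : X ⊆ Set.Ioo 0 1) :
    affMap ρ S.t a '' X ⊆ Set.Ioo (affMap ρ S.t a 0) (affMap ρ S.t a 1) := by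
  rintro y ⟨x, hx, rfl⟩
  exact ⟨aff_lt hρ S ha (hX hx).1, aff_lt hρ S ha (hX hx).2⟩

lemma aff_Ioo01 {a : ℕ} (ha : a < n) {X : Set ℝ} (hX : X ⊆ Set.Ioo 0 1) :
    affMap ρ S.t a '' X ⊆ Set.Ioo 0 1 := by
  intro y hy
  obtain ⟨h1, h2⟩ := aff_Ioo hρ S ha hX hy
  exact ⟨lt_of_le_of_lt (e_nonneg hρ S ha) h1, lt_of_lt_of_le h2 (f_le_one hρ S ha)⟩

lemma word_Ioo01 {w : List ℕ} (hw : ∀ a ∈ w, a < n) {X : Set ℝ} (hX : X ⊆ Set.Ioo 0 1) :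
    affWord ρ S.t w '' X ⊆ Set.Ioo 0 1 := by
  induction w with
  | nil => simpa [affWord]
  | cons a w ih =>
    rw [image_cons]
    exact aff_Ioo01 hρ S (hw a (by simp)) (ih (fun b hb => hw b (by simp [hb])))

/- separation lemmas -/
lemma sep_lt {a b : ℕ} (hab : a < b) (hb : b < n) {X Y : Set ℝ}
    (hX : X ⊆ Set.Iio (affMap ρ S.t a 1)) (hY : Y ⊆ Set.Ici (affMap ρ S.t b 0)) :
    X ∩ Y = ∅ := by
  rw [Set.eq_empty_iff_forall_notMem]
  rintro x ⟨hx, hy⟩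
  have := chain hρ S hab hb
  have h1 := hX hx
  have h2 := hY hy
  simp only [Set.mem_Iio, Set.mem_Ici] at h1 h2
  linarith

lemma sep_gt {a b : ℕ} (hab : a < b) (hb : b < n) {X Y : Set ℝ}
    (hX : X ⊆ Set.Iic (affMap ρ S.t a 1)) (hY : Y ⊆ Set.Ioi (affMap ρ S.t b 0)) :
    X ∩ Y = ∅ := by
  rw [Set.eq_empty_iff_forall_notMem]
  rintro x ⟨hx, hy⟩
  have := chain hρ S hab hb
  have h1 := hX hx
  have h2 := hY hy
  simp only [Set.mem_Iic, Set.mem_Ioi] at h1 h2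
  linarith

lemma sep_far {a b : ℕ} (hab : a + 1 < b) (hb : b < n) {X Y : Set ℝ}
    (hX : X ⊆ Set.Iic (affMap ρ S.t a 1)) (hY : Y ⊆ Set.Ici (affMap ρ S.t b 0)) :
    X ∩ Y = ∅ := by
  rw [Set.eq_empty_iff_forall_notMem]
  rintro x ⟨hx, hy⟩
  have := chain_far hρ S hab hb
  have h1 := hX hx
  have h2 := hY hy
  simp only [Set.mem_Iic, Set.mem_Ici] at h1 h2
  linarith

/-- open-vs-closed separation for distinct letters. -/
lemma sep_ne {a b : ℕ} (hab : a ≠ b) (ha : a < n) (hb : b < n) {X Y : Set ℝ}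
    (hX : X ⊆ Set.Ioo (affMap ρ S.t a 0) (affMap ρ S.t a 1))
    (hY : Y ⊆ Set.Icc (affMap ρ S.t b 0) (affMap ρ S.t b 1)) :
    X ∩ Y = ∅ := by
  rcases Nat.lt_or_ge a b with h | h
  · exact sep_lt hρ S h hb (fun x hx => (hX hx).2) (fun y hy => (hY hy).1)
  · have h' : b < a := by omega
    rw [Set.inter_comm]
    exact sep_gt hρ S h' ha (fun y hy => (hY hy).2) (fun x hx => (hX hx).1)

end Words
end CsetAux
namespace CsetAux
variable {n : ℕ} {ρ : ℕ → ℝ}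

/-- inner right patch `⋃_{j ∈ [n-β,n)} Ψ_{(n-1)^m j}(T)`. -/
def Rset (S : TouchingIFS n ρ) (β m : ℕ) : Set ℝ :=
  ⋃ j ∈ Finset.Ico (n - β) n, affWord ρ S.t (List.replicate m (n-1) ++ [j]) '' S.T

/-- inner left patch `⋃_{j < α} Ψ_{0^m j}(T)`. -/
def Lset (S : TouchingIFS n ρ) (α m : ℕ) : Set ℝ :=
  ⋃ j ∈ Finset.range α, affWord ρ S.t (List.replicate m 0 ++ [j]) '' S.T

section RL
variable (hρ : ContractionVec n ρ) (S : TouchingIFS n ρ)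

lemma Rset_succ (β m : ℕ) : Rset S β (m+1) = affMap ρ S.t (n-1) '' Rset S β m := by
  unfold Rset
  rw [Set.image_iUnion₂]
  refine Set.iUnion₂_congr fun j hj => ?_
  rw [List.replicate_succ, List.cons_append, image_cons]

lemma Lset_succ (α m : ℕ) : Lset S α (m+1) = affMap ρ S.t 0 '' Lset S α m := by
  unfold Lset
  rw [Set.image_iUnion₂]
  refine Set.iUnion₂_congr fun j hj => ?_
  rw [List.replicate_succ, List.cons_append, image_cons]

include hρ

lemma n3 : 3 ≤ n := hρ.three_le

lemma f01_pos : 0 < affMap ρ S.t 0 1 := by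
  have := e_lt_f hρ S (a := 0) (by have := n3 hρ; omega)
  have := S.left0
  linarith

lemma fn0_lt_one : affMap ρ S.t (n-1) 0 < 1 := by
  have := e_lt_f hρ S (a := n-1) (by have := n3 hρ; omega)
  have := S.right1
  linarith

lemma Rset_sub {β : ℕ} (hβn : β < n) {m : ℕ} : Rset S β m ⊆ Set.Icc (affMap ρ S.t 0 1) 1 := by
  have hn := n3 hρ
  induction m with
  | zero =>
    rintro y hy
    simp only [Rset, List.replicate, Set.mem_iUnion, List.nil_append, Finset.mem_Ico] at hy
    obtain ⟨j, ⟨hj1, hj2⟩, x, hx, rfl⟩ := hy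
    obtain ⟨hx0, hx1⟩ := T_sub hρ S hx
    have hj0 : 0 < j := by omega
    have h1 : affMap ρ S.t 0 1 ≤ affMap ρ S.t j 0 := chain hρ S hj0 hj2
    have h2 : affMap ρ S.t j 0 ≤ affWord ρ S.t [j] x := aff_le hρ S hj2 hx0
    have h3 : affWord ρ S.t [j] x ≤ affMap ρ S.t j 1 := aff_le hρ S hj2 hx1
    exact ⟨le_trans h1 h2, le_trans h3 (f_le_one hρ S hj2)⟩
  | succ m ih =>
    rw [Rset_succ]
    rintro y ⟨z, hz, rfl⟩
    obtain ⟨hz1, hz2⟩ := ih hz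
    have h01 : (0:ℝ) ≤ affMap ρ S.t 0 1 := le_of_lt (f01_pos hρ S)
    have h1 : affMap ρ S.t (n-1) 0 ≤ affMap ρ S.t (n-1) z :=
      aff_le hρ S (by omega) (le_trans h01 hz1)
    have h2 : affMap ρ S.t 0 1 ≤ affMap ρ S.t (n-1) 0 := chain hρ S (by omega) (by omega)
    have h3 : affMap ρ S.t (n-1) z ≤ affMap ρ S.t (n-1) 1 := aff_le hρ S (by omega) hz2
    have h4 := S.right1
    exact ⟨le_trans h2 h1, by linarith⟩

lemma Rset_Ioi {β : ℕ} (hβn : β < n) {m : ℕ} (hm : 1 ≤ m) : Rset S β m ⊆ Set.Ioi (affMap ρ S.t (n-1) 0) := by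
  have hn := n3 hρ
  obtain ⟨m', rfl⟩ : ∃ m', m = m' + 1 := ⟨m - 1, by omega⟩
  rw [Rset_succ]
  rintro y ⟨z, hz, rfl⟩
  have hz1 := (Rset_sub hρ S hβn hz).1
  have : 0 < z := lt_of_lt_of_le (f01_pos hρ S) hz1
  exact Set.mem_Ioi.mpr (aff_lt hρ S (by omega) this)

lemma Rset_T {β m : ℕ} : Rset S β m ⊆ S.T := by
  have hn := n3 hρ
  intro y hy
  simp only [Rset, Set.mem_iUnion, Finset.mem_Ico] at hy
  obtain ⟨j, ⟨hj1, hj2⟩, hy⟩ := hy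
  refine word_T_sub hρ S ?_ hy
  intro a ha
  simp only [List.mem_append, List.mem_replicate, List.mem_singleton] at ha
  rcases ha with ⟨_, rfl⟩ | rfl
  · omega
  · exact hj2

lemma Lset_sub {α : ℕ} (hαn : α < n) {m : ℕ} : Lset S α m ⊆ Set.Icc 0 (affMap ρ S.t (n-1) 0) := by
  have hn := n3 hρ
  induction m with
  | zero =>
    rintro y hy
    simp only [Lset, List.replicate, Set.mem_iUnion, List.nil_append, Finset.mem_range] at hy
    obtain ⟨j, hj, x, hx, rfl⟩ := hy
    have hjn : j < n := by omega
    obtain ⟨hx0, hx1⟩ := T_sub hρ S hx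
    have h1 : 0 ≤ affMap ρ S.t j 0 := e_nonneg hρ S hjn
    have h2 : affMap ρ S.t j 0 ≤ affWord ρ S.t [j] x := aff_le hρ S hjn hx0
    have h3 : affWord ρ S.t [j] x ≤ affMap ρ S.t j 1 := aff_le hρ S hjn hx1
    have h4 : affMap ρ S.t j 1 ≤ affMap ρ S.t (n-1) 0 := chain hρ S (by omega) (by omega)
    exact ⟨le_trans h1 h2, by linarith⟩
  | succ m ih =>
    rw [Lset_succ]
    rintro y ⟨z, hz, rfl⟩
    obtain ⟨hz1, hz2⟩ := ih hz
    have hz2' : z ≤ 1 := le_trans hz2 (le_of_lt (fn0_lt_one hρ S))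
    have h1 : 0 ≤ affMap ρ S.t 0 z := by
      have := aff_le hρ S (a := 0) (by omega) hz1
      have := S.left0
      linarith
    have h2 : affMap ρ S.t 0 z ≤ affMap ρ S.t 0 1 := aff_le hρ S (by omega) hz2'
    have h3 : affMap ρ S.t 0 1 ≤ affMap ρ S.t (n-1) 0 := chain hρ S (by omega) (by omega)
    exact ⟨h1, by linarith⟩

lemma f1_mono {a b : ℕ} (hab : a ≤ b) (hb : b < n) :
    affMap ρ S.t a 1 ≤ affMap ρ S.t b 1 := by
  rcases Nat.eq_or_lt_of_le hab with rfl | h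
  · exact le_rfl
  · exact le_trans (chain hρ S h hb) (aff_le hρ S hb zero_le_one)

lemma e_mono {a b : ℕ} (hab : a ≤ b) (hb : b < n) :
    affMap ρ S.t a 0 ≤ affMap ρ S.t b 0 := by
  rcases Nat.eq_or_lt_of_le hab with rfl | h
  · exact le_rfl
  · exact le_trans (aff_le hρ S (by omega) zero_le_one) (chain hρ S h hb)

lemma Lset_le {α : ℕ} (hα1 : 1 ≤ α) (hαn : α < n) {m : ℕ} : Lset S α m ⊆ Set.Iic (affMap ρ S.t (α-1) 1) := by
  have hn := n3 hρ
  induction m with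
  | zero =>
    rintro y hy
    simp only [Lset, List.replicate, Set.mem_iUnion, List.nil_append, Finset.mem_range] at hy
    obtain ⟨j, hj, x, hx, rfl⟩ := hy
    have hjn : j < n := by omega
    have h3 : affWord ρ S.t [j] x ≤ affMap ρ S.t j 1 := aff_le hρ S hjn (T_sub hρ S hx).2
    have h4 : affMap ρ S.t j 1 ≤ affMap ρ S.t (α-1) 1 := f1_mono hρ S (by omega) (by omega)
    exact le_trans h3 h4
  | succ m ih =>
    rw [Lset_succ]
    rintro y ⟨z, hz, rfl⟩
    have hz2 : z ≤ 1 := le_trans ((Lset_sub hρ S hαn) hz).2 (le_of_lt (fn0_lt_one hρ S))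
    have h2 : affMap ρ S.t 0 z ≤ affMap ρ S.t 0 1 := aff_le hρ S (by omega) hz2
    have h3 : affMap ρ S.t 0 1 ≤ affMap ρ S.t (α-1) 1 := f1_mono hρ S (by omega) (by omega)
    exact le_trans h2 h3

lemma Lset_Iio {α : ℕ} (hαn : α < n) {m : ℕ} (hm : 1 ≤ m) : Lset S α m ⊆ Set.Iio (affMap ρ S.t 0 1) := by
  have hn := n3 hρ
  obtain ⟨m', rfl⟩ : ∃ m', m = m' + 1 := ⟨m - 1, by omega⟩
  rw [Lset_succ]
  rintro y ⟨z, hz, rfl⟩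
  have hz2 : z < 1 := lt_of_le_of_lt ((Lset_sub hρ S hαn) hz).2 (fn0_lt_one hρ S)
  exact Set.mem_Iio.mpr (aff_lt hρ S (by omega) hz2)

lemma Lset_T {α m : ℕ} (hαn : α < n) : Lset S α m ⊆ S.T := by
  have hn := n3 hρ
  intro y hy
  simp only [Lset, Set.mem_iUnion, Finset.mem_range] at hy
  obtain ⟨j, hj, hy⟩ := hy
  refine word_T_sub hρ S ?_ hy
  intro a ha
  simp only [List.mem_append, List.mem_replicate, List.mem_singleton] at ha
  rcases ha with ⟨_, rfl⟩ | rfl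
  · omega
  · omega

/-- `L ∩ R = ∅` when the left index is positive. -/
lemma LR_disj {α β : ℕ} (hαn : α < n) (hβn : β < n) {s r : ℕ} (hs : 1 ≤ s) : Lset S α s ∩ Rset S β r = ∅ := by
  rw [Set.eq_empty_iff_forall_notMem]
  rintro x ⟨hx, hy⟩
  have h1 := Lset_Iio hρ S hαn hs hx
  have h2 := (Rset_sub hρ S hβn hy).1
  simp only [Set.mem_Iio] at h1
  linarith

/-- `R ∩ L = ∅` when the right index is positive. -/
lemma RL_disj {α β : ℕ} (hαn : α < n) (hβn : β < n) {s r : ℕ} (hr : 1 ≤ r) : Rset S β r ∩ Lset S α s = ∅ := by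
  rw [Set.eq_empty_iff_forall_notMem]
  rintro x ⟨hx, hy⟩
  have h1 := Rset_Ioi hρ S hβn hr hx
  have h2 := (Lset_sub hρ S hαn hy).2
  simp only [Set.mem_Ioi] at h1
  linarith

end RL
end CsetAux
namespace CsetAux
section CsetFacts
variable {n : ℕ} {ρ : ℕ → ℝ} (hρ : ContractionVec n ρ) (S : TouchingIFS n ρ)

/- image bound helpers -/
lemma aff_img_Icc {a : ℕ} {u v : ℝ} {X : Set ℝ} (hρ' : ContractionVec n ρ) (ha : a < n)
    (hX : X ⊆ Set.Icc u v) :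
    affMap ρ S.t a '' X ⊆ Set.Icc (affMap ρ S.t a u) (affMap ρ S.t a v) := by
  rintro y ⟨x, hx, rfl⟩
  exact ⟨aff_le hρ' S ha (hX hx).1, aff_le hρ' S ha (hX hx).2⟩

lemma aff_img_le {a : ℕ} {v : ℝ} {X : Set ℝ} (hρ' : ContractionVec n ρ) (ha : a < n)
    (hX : X ⊆ Set.Iic v) : affMap ρ S.t a '' X ⊆ Set.Iic (affMap ρ S.t a v) := by
  rintro y ⟨x, hx, rfl⟩; exact aff_le hρ' S ha (hX hx)

lemma aff_img_lt {a : ℕ} {v : ℝ} {X : Set ℝ} (hρ' : ContractionVec n ρ) (ha : a < n)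
    (hX : X ⊆ Set.Iio v) : affMap ρ S.t a '' X ⊆ Set.Iio (affMap ρ S.t a v) := by
  rintro y ⟨x, hx, rfl⟩; exact aff_lt hρ' S ha (hX hx)

lemma aff_img_ge {a : ℕ} {u : ℝ} {X : Set ℝ} (hρ' : ContractionVec n ρ) (ha : a < n)
    (hX : X ⊆ Set.Ici u) : affMap ρ S.t a '' X ⊆ Set.Ici (affMap ρ S.t a u) := by
  rintro y ⟨x, hx, rfl⟩; exact aff_le hρ' S ha (hX hx)

lemma aff_img_gt {a : ℕ} {u : ℝ} {X : Set ℝ} (hρ' : ContractionVec n ρ) (ha : a < n)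
    (hX : X ⊆ Set.Ioi u) : affMap ρ S.t a '' X ⊆ Set.Ioi (affMap ρ S.t a u) := by
  rintro y ⟨x, hx, rfl⟩; exact aff_lt hρ' S ha (hX hx)

/-- `Cset` as union of two letter-images. -/
lemma Cset_eq (α β i₀ : ℕ) (τ : ℕ → ℕ) (k : ℕ) :
    Cset S α β i₀ τ k =
      affMap ρ S.t i₀ '' Rset S β k ∪ affMap ρ S.t (i₀+1) '' Lset S α (τ k) := by
  unfold Cset TouchingIFS.patchR TouchingIFS.patchL TouchingIFS.cyl Rset Lset
  rw [Set.image_iUnion₂, Set.image_iUnion₂]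
  congr 1
  · refine Set.iUnion₂_congr fun j hj => ?_
    rw [List.append_assoc, List.singleton_append, image_cons]
  · refine Set.iUnion₂_congr fun j hj => ?_
    rw [List.append_assoc, List.singleton_append, image_cons]

section WithHyp
variable (hρ : ContractionVec n ρ)
include hρ

lemma tau_mono {τ : ℕ → ℕ} (hτ : tauSpec ρ n τ) (hρ1n : ρ (n - 1) ≤ ρ 0)
    {k ℓ : ℕ} (hℓ : 1 ≤ ℓ) (hkℓ : ℓ < k) : τ ℓ < τ k := by
  have hn := n3 hρ
  have h0 : 0 < ρ 0 := hρ.pos 0 (by omega)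
  have h01 : ρ 0 < 1 := hρ.lt_one 0 (by omega)
  have hs0 : 0 < ρ (n-1) := hρ.pos (n-1) (by omega)
  have hs1 : ρ (n-1) < 1 := hρ.lt_one (n-1) (by omega)
  obtain ⟨_, _, hk2⟩ := hτ k (by omega)
  obtain ⟨_, hl1, _⟩ := hτ ℓ hℓ
  have key : ρ 0 ^ τ k < ρ 0 ^ τ ℓ := by
    have e1 : ρ (n-1) ^ k = ρ (n-1) ^ ℓ * ρ (n-1) ^ (k - ℓ) := by
      rw [← pow_add]; congr 1; omega
    have e2 : ρ (n-1) ^ (k - ℓ) ≤ ρ (n-1) := by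
      have h := pow_le_pow_of_le_one (le_of_lt hs0) (le_of_lt hs1)
        (show 1 ≤ k - ℓ by omega)
      simpa using h
    have e3 : ρ (n-1) ^ k ≤ ρ (n-1) ^ ℓ * ρ 0 := by
      rw [e1]
      have hp : (0:ℝ) ≤ ρ (n-1) ^ ℓ := le_of_lt (pow_pos hs0 ℓ)
      nlinarith [le_trans e2 hρ1n]
    calc ρ 0 ^ τ k ≤ ρ (n-1) ^ k := hk2
      _ ≤ ρ (n-1) ^ ℓ * ρ 0 := e3
      _ < ρ 0 ^ τ ℓ := hl1
  by_contra h
  have : ρ 0 ^ τ ℓ ≤ ρ 0 ^ τ k :=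
    pow_le_pow_of_le_one (le_of_lt h0) (le_of_lt h01) (by omega)
  linarith

lemma le_tau {τ : ℕ → ℕ} (hτ : tauSpec ρ n τ) (hρ1n : ρ (n - 1) ≤ ρ 0)
    {k : ℕ} (hk : 1 ≤ k) : k ≤ τ k := by
  have hn := n3 hρ
  have h0 : 0 < ρ 0 := hρ.pos 0 (by omega)
  have h01 : ρ 0 < 1 := hρ.lt_one 0 (by omega)
  have hs0 : 0 < ρ (n-1) := hρ.pos (n-1) (by omega)
  obtain ⟨_, _, hk2⟩ := hτ k hk
  have h2 : ρ (n-1) ^ k ≤ ρ 0 ^ k := pow_le_pow_left₀ (le_of_lt hs0) hρ1n k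
  by_contra h
  have : ρ 0 ^ k < ρ 0 ^ τ k := pow_lt_pow_right_of_lt_one₀ h0 h01 (by omega)
  linarith

/-- monotone inclusion of inner right patches. -/
lemma Rset_mono {β : ℕ} (hβ1 : 1 ≤ β) (hβn : β < n) {k ℓ : ℕ} (hkℓ : ℓ < k) :
    Rset S β k ⊆ Rset S β ℓ := by
  have hn := n3 hρ
  intro y hy
  simp only [Rset, Set.mem_iUnion, Finset.mem_Ico] at hy ⊢
  obtain ⟨j, ⟨hj1, hj2⟩, x, hx, rfl⟩ := hy
  refine ⟨n-1, ⟨by omega, by omega⟩, ?_⟩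
  have hw : List.replicate k (n-1) ++ [j]
      = (List.replicate ℓ (n-1) ++ [n-1]) ++ (List.replicate (k-ℓ-1) (n-1) ++ [j]) := by
    rw [← List.replicate_succ']
    rw [← List.append_assoc, ← List.replicate_add]
    congr 2
    omega
  rw [hw, affWord_append]
  refine ⟨affWord ρ S.t (List.replicate (k-ℓ-1) (n-1) ++ [j]) x, ?_, rfl⟩
  refine word_T_sub hρ S ?_ ⟨x, hx, rfl⟩
  intro a ha
  simp only [List.mem_append, List.mem_replicate, List.mem_singleton] at ha
  rcases ha with ⟨_, rfl⟩ | rfl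
  · omega
  · exact hj2

/-- monotone inclusion of inner left patches. -/
lemma Lset_mono {α : ℕ} (hα1 : 1 ≤ α) (hαn : α < n) {k ℓ : ℕ} (hkℓ : ℓ < k) :
    Lset S α k ⊆ Lset S α ℓ := by
  have hn := n3 hρ
  intro y hy
  simp only [Lset, Set.mem_iUnion, Finset.mem_range] at hy ⊢
  obtain ⟨j, hj, x, hx, rfl⟩ := hy
  refine ⟨0, by omega, ?_⟩
  have hw : List.replicate k 0 ++ [j]
      = (List.replicate ℓ 0 ++ [0]) ++ (List.replicate (k-ℓ-1) 0 ++ [j]) := by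
    rw [← List.replicate_succ']
    rw [← List.append_assoc, ← List.replicate_add]
    congr 2
    omega
  rw [hw, affWord_append]
  refine ⟨affWord ρ S.t (List.replicate (k-ℓ-1) 0 ++ [j]) x, ?_, rfl⟩
  refine word_T_sub hρ S ?_ ⟨x, hx, rfl⟩
  intro a ha
  simp only [List.mem_append, List.mem_replicate, List.mem_singleton] at ha
  rcases ha with ⟨_, rfl⟩ | rfl
  · omega
  · omega

/-- `Cᵏ ⊆ Cˡ` for `k > ℓ`. -/
lemma Cset_mono {α β i₀ : ℕ} (hα1 : 1 ≤ α) (hαn : α < n) (hβ1 : 1 ≤ β) (hβn : β < n)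
    {τ : ℕ → ℕ} (hτ : tauSpec ρ n τ) (hρ1n : ρ (n - 1) ≤ ρ 0)
    {k ℓ : ℕ} (hℓ : 1 ≤ ℓ) (hkℓ : ℓ < k) :
    Cset S α β i₀ τ k ⊆ Cset S α β i₀ τ ℓ := by
  rw [Cset_eq, Cset_eq]
  refine Set.union_subset_union ?_ ?_
  · exact Set.image_mono (Rset_mono hρ S hβ1 hβn hkℓ)
  · exact Set.image_mono (Lset_mono hρ S hα1 hαn (tau_mono hρ hτ hρ1n hℓ hkℓ))

end WithHyp
end CsetFacts
end CsetAux
namespace CsetAux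
section Terminal
variable {n : ℕ} {ρ : ℕ → ℝ} (hρ : ContractionVec n ρ) (S : TouchingIFS n ρ)
include hρ

lemma aff_inj {a : ℕ} (ha : a < n) : Function.Injective (affMap ρ S.t a) :=
  (aff_strictMono hρ S ha).injective

lemma Rset_Ici0 {β : ℕ} (hβn : β < n) : Rset S β 0 ⊆ Set.Ici (affMap ρ S.t (n-β) 0) := by
  intro y hy
  simp only [Rset, List.replicate, Set.mem_iUnion, List.nil_append, Finset.mem_Ico] at hy
  obtain ⟨j, ⟨hj1, hj2⟩, x, hx, rfl⟩ := hy
  have h1 : affMap ρ S.t (n-β) 0 ≤ affMap ρ S.t j 0 := e_mono hρ S hj1 hj2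
  have h2 : affMap ρ S.t j 0 ≤ affWord ρ S.t [j] x := aff_le hρ S hj2 (T_sub hρ S hx).1
  exact le_trans h1 h2

lemma Rset_pos {β : ℕ} (hβn : β < n) {m : ℕ} : Rset S β m ⊆ Set.Ioi 0 :=
  fun z hz => lt_of_lt_of_le (f01_pos hρ S) (Rset_sub hρ S hβn hz).1

lemma Rset_le1 {β : ℕ} (hβn : β < n) {m : ℕ} : Rset S β m ⊆ Set.Iic 1 :=
  fun z hz => (Rset_sub hρ S hβn hz).2

lemma Lset_nonneg {α : ℕ} (hαn : α < n) {m : ℕ} : Lset S α m ⊆ Set.Ici 0 :=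
  fun z hz => (Lset_sub hρ S hαn hz).1

lemma Lset_lt1 {α : ℕ} (hαn : α < n) {m : ℕ} : Lset S α m ⊆ Set.Iio 1 :=
  fun z hz => lt_of_le_of_lt (Lset_sub hρ S hαn hz).2 (fn0_lt_one hρ S)

lemma Cset_T {α β i₀ : ℕ} (hi₀n : i₀ + 1 < n) (hαn : α < n) {τ : ℕ → ℕ} {k : ℕ} :
    Cset S α β i₀ τ k ⊆ S.T := by
  rw [Cset_eq]
  refine Set.union_subset ?_ ?_
  · exact subset_trans (Set.image_mono (Rset_T hρ S)) (aff_T_sub hρ S (by omega))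
  · exact subset_trans (Set.image_mono (Lset_T hρ S hαn)) (aff_T_sub hρ S (by omega))

lemma Cset_Ioo {α β i₀ : ℕ} (hi₀n : i₀ + 1 < n) (hαn : α < n) (hβn : β < n)
    {τ : ℕ → ℕ} {k : ℕ} : Cset S α β i₀ τ k ⊆ Set.Ioo 0 1 := by
  have hn := n3 hρ
  rw [Cset_eq]
  refine Set.union_subset ?_ ?_
  · rintro y ⟨z, hz, rfl⟩
    constructor
    · have h1 : 0 < z := Rset_pos hρ S hβn hz
      have h2 : affMap ρ S.t i₀ 0 < affMap ρ S.t i₀ z := aff_lt hρ S (by omega) h1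
      have := e_nonneg hρ S (a := i₀) (by omega)
      linarith
    · have h1 : affMap ρ S.t i₀ z ≤ affMap ρ S.t i₀ 1 :=
        aff_le hρ S (by omega) (Rset_le1 hρ S hβn hz)
      have h2 : affMap ρ S.t i₀ 1 ≤ affMap ρ S.t (i₀+1) 0 := chain hρ S (by omega) hi₀n
      have h3 := e_lt_f hρ S hi₀n
      have h4 := f_le_one hρ S hi₀n
      linarith
  · rintro y ⟨z, hz, rfl⟩
    constructor
    · have h1 : affMap ρ S.t (i₀+1) 0 ≤ affMap ρ S.t (i₀+1) z :=
        aff_le hρ S hi₀n (Lset_nonneg hρ S hαn hz)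
      have h2 : affMap ρ S.t 0 1 ≤ affMap ρ S.t (i₀+1) 0 := chain hρ S (by omega) hi₀n
      have := f01_pos hρ S
      linarith
    · have h1 : affMap ρ S.t (i₀+1) z < affMap ρ S.t (i₀+1) 1 :=
        aff_lt hρ S hi₀n (Lset_lt1 hρ S hαn hz)
      have h2 := f_le_one hρ S hi₀n
      linarith

/-- `Cᵏ ∩ R_m = ∅` for `m ≥ 1`. -/
lemma Cset_Rset_disj {α β i₀ : ℕ} (hi₀n : i₀ + 1 < n) (hαn : α < n) (hβn : β < n)
    {τ : ℕ → ℕ} {k : ℕ} (htk : 1 ≤ τ k) {m : ℕ} (hm : 1 ≤ m) :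
    Cset S α β i₀ τ k ∩ Rset S β m = ∅ := by
  have hn := n3 hρ
  rw [Cset_eq, Set.union_inter_distrib_right]
  have h1 : (affMap ρ S.t i₀ '' Rset S β k) ∩ Rset S β m = ∅ := by
    refine sep_gt hρ S (a := i₀) (b := n-1) (by omega) (by omega) ?_ (Rset_Ioi hρ S hβn hm)
    have := aff_img_le S hρ (a := i₀) (by omega) (Rset_le1 hρ S hβn (m := k))
    simpa using this
  have h2 : (affMap ρ S.t (i₀+1) '' Lset S α (τ k)) ∩ Rset S β m = ∅ := by
    rcases Nat.lt_or_ge (i₀+1) (n-1) with hc | hc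
    · refine sep_gt hρ S (a := i₀+1) (b := n-1) hc (by omega) ?_ (Rset_Ioi hρ S hβn hm)
      have h' : Lset S α (τ k) ⊆ Set.Iic (1:ℝ) :=
        fun z hz => Set.mem_Iic.mpr (le_of_lt (Lset_lt1 hρ S hαn hz))
      have := aff_img_le S hρ (a := i₀+1) (by omega) h'
      simpa using this
    · have hc' : i₀ + 1 = n - 1 := by omega
      obtain ⟨m', rfl⟩ : ∃ m', m = m' + 1 := ⟨m - 1, by omega⟩
      rw [Rset_succ, hc', ← Set.image_inter (aff_inj hρ S (a := n-1) (by omega))]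
      rw [LR_disj hρ S hαn hβn htk]
      exact Set.image_empty _
  rw [h1, h2, Set.union_empty]

/-- `Cᵏ` versus `R_0`. -/
lemma Cset_Rset0 {α β i₀ : ℕ} (hi₀ : S.touch i₀) (hαn : α < n)
    (hβr : S.betaRun β) {τ : ℕ → ℕ} {k : ℕ} (htk : 1 ≤ τ k) :
    Cset S α β i₀ τ k ∩ Rset S β 0 = ∅ ∨ Cset S α β i₀ τ k ⊆ Rset S β 0 := by
  have hn := n3 hρ
  have hi₀n := hi₀.1
  obtain ⟨hβ1, hβn, -, hβt⟩ := hβr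
  rcases Nat.lt_or_ge i₀ (n - β) with h | h
  · -- disjoint
    left
    have hne : i₀ + 1 < n - β := by
      rcases Nat.lt_or_ge (i₀+1) (n-β) with h' | h'
      · exact h'
      · exfalso
        have : i₀ + 1 = n - β := by omega
        have : n - β - 1 = i₀ := by omega
        rw [this] at hβt
        exact hβt hi₀
    rw [Cset_eq, Set.union_inter_distrib_right]
    have h1 : (affMap ρ S.t i₀ '' Rset S β k) ∩ Rset S β 0 = ∅ := by
      refine sep_far hρ S (a := i₀) (b := n-β) hne (by omega) ?_ (Rset_Ici0 hρ S hβn)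
      have := aff_img_le S hρ (a := i₀) (by omega) (Rset_le1 hρ S hβn (m := k))
      simpa using this
    have h2 : (affMap ρ S.t (i₀+1) '' Lset S α (τ k)) ∩ Rset S β 0 = ∅ := by
      refine sep_lt hρ S (a := i₀+1) (b := n-β) hne (by omega) ?_ (Rset_Ici0 hρ S hβn)
      have := aff_img_lt S hρ (a := i₀+1) (by omega) (Lset_lt1 hρ S hαn (m := τ k))
      simpa using this
    rw [h1, h2, Set.union_empty]
  · -- containment
    right
    rw [Cset_eq]
    refine Set.union_subset ?_ ?_
    · rintro y ⟨z, hz, rfl⟩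
      simp only [Rset, List.replicate, Set.mem_iUnion, List.nil_append, Finset.mem_Ico]
      exact ⟨i₀, ⟨h, by omega⟩, z, Rset_T hρ S hz, rfl⟩
    · rintro y ⟨z, hz, rfl⟩
      simp only [Rset, List.replicate, Set.mem_iUnion, List.nil_append, Finset.mem_Ico]
      exact ⟨i₀+1, ⟨by omega, by omega⟩, z, Lset_T hρ S hαn hz, rfl⟩

/-- `Cᵏ ∩ L_m = ∅` for `m ≥ 1`. -/
lemma Cset_Lset_disj {α β i₀ : ℕ} (hi₀n : i₀ + 1 < n) (hαn : α < n) (hβn : β < n)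
    {τ : ℕ → ℕ} {k : ℕ} (hk : 1 ≤ k) {m : ℕ} (hm : 1 ≤ m) :
    Cset S α β i₀ τ k ∩ Lset S α m = ∅ := by
  have hn := n3 hρ
  rw [Cset_eq, Set.union_inter_distrib_right]
  have h2 : (affMap ρ S.t (i₀+1) '' Lset S α (τ k)) ∩ Lset S α m = ∅ := by
    rw [Set.inter_comm]
    refine sep_lt hρ S (a := 0) (b := i₀+1) (by omega) hi₀n (Lset_Iio hρ S hαn hm) ?_
    have := aff_img_ge S hρ (a := i₀+1) (by omega) (Lset_nonneg hρ S hαn (m := τ k))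
    simpa using this
  have h1 : (affMap ρ S.t i₀ '' Rset S β k) ∩ Lset S α m = ∅ := by
    rcases Nat.eq_zero_or_pos i₀ with rfl | hpos
    · obtain ⟨m', rfl⟩ : ∃ m', m = m' + 1 := ⟨m - 1, by omega⟩
      rw [Lset_succ, ← Set.image_inter (aff_inj hρ S (a := 0) (by omega))]
      rw [RL_disj hρ S hαn hβn hk]
      exact Set.image_empty _
    · rw [Set.inter_comm]
      refine sep_lt hρ S (a := 0) (b := i₀) (by omega) (by omega)
        (Lset_Iio hρ S hαn hm) ?_
      have h' : Rset S β k ⊆ Set.Ici (0:ℝ) :=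
        fun z hz => Set.mem_Ici.mpr (le_of_lt (Rset_pos hρ S hβn hz))
      have := aff_img_ge S hρ (a := i₀) (by omega) h'
      simpa using this
  rw [h1, h2, Set.union_empty]

/-- `Cᵏ` versus `L_0`. -/
lemma Cset_Lset0 {α β i₀ : ℕ} (hi₀ : S.touch i₀) (hαr : S.alphaRun α) (hβn : β < n)
    {τ : ℕ → ℕ} {k : ℕ} (hk : 1 ≤ k) :
    Cset S α β i₀ τ k ∩ Lset S α 0 = ∅ ∨ Cset S α β i₀ τ k ⊆ Lset S α 0 := by
  have hn := n3 hρ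
  have hi₀n := hi₀.1
  obtain ⟨hα1, hαn, -, hαt⟩ := hαr
  rcases Nat.lt_or_ge (i₀+1) α with h | h
  · -- containment
    right
    rw [Cset_eq]
    refine Set.union_subset ?_ ?_
    · rintro y ⟨z, hz, rfl⟩
      simp only [Lset, List.replicate, Set.mem_iUnion, List.nil_append, Finset.mem_range]
      exact ⟨i₀, by omega, z, Rset_T hρ S hz, rfl⟩
    · rintro y ⟨z, hz, rfl⟩
      simp only [Lset, List.replicate, Set.mem_iUnion, List.nil_append, Finset.mem_range]
      exact ⟨i₀+1, by omega, z, Lset_T hρ S hαn hz, rfl⟩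
  · -- disjoint
    left
    have hαi₀ : α ≤ i₀ := by
      rcases Nat.lt_or_ge i₀ α with h' | h'
      · exfalso
        have : α - 1 = i₀ := by omega
        rw [this] at hαt
        exact hαt hi₀
      · exact h'
    rw [Cset_eq, Set.union_inter_distrib_right]
    have h1 : (affMap ρ S.t i₀ '' Rset S β k) ∩ Lset S α 0 = ∅ := by
      rw [Set.inter_comm]
      refine sep_gt hρ S (a := α-1) (b := i₀) (by omega) (by omega)
        (Lset_le hρ S hα1 hαn) ?_
      have h0 : Rset S β k ⊆ Set.Ioi (0:ℝ) := Rset_pos hρ S hβn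
      have := aff_img_gt S hρ (a := i₀) (by omega) h0
      simpa using this
    have h2 : (affMap ρ S.t (i₀+1) '' Lset S α (τ k)) ∩ Lset S α 0 = ∅ := by
      rw [Set.inter_comm]
      refine sep_far hρ S (a := α-1) (b := i₀+1) (by omega) hi₀n
        (Lset_le hρ S hα1 hαn) ?_
      have := aff_img_ge S hρ (a := i₀+1) (by omega) (Lset_nonneg hρ S hαn (m := τ k))
      simpa using this
    rw [h1, h2, Set.union_empty]

end Terminal
end CsetAux
namespace CsetAux
section Recs
variable {n : ℕ} {ρ : ℕ → ℝ} (hρ : ContractionVec n ρ) (S : TouchingIFS n ρ)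

lemma image_append (u v : List ℕ) (X : Set ℝ) :
    affWord ρ S.t (u ++ v) '' X = affWord ρ S.t u '' (affWord ρ S.t v '' X) := by
  rw [← Set.image_comp]
  apply Set.image_congr'
  intro x
  exact affWord_append S u v x

include hρ

lemma word_inj {w : List ℕ} (hw : ∀ a ∈ w, a < n) :
    Function.Injective (affWord ρ S.t w) :=
  (affWord_strictMono hρ S hw).injective

lemma rightRec {β : ℕ} (hβ1 : 1 ≤ β) (hβn : β < n) {X : Set ℝ}
    (hXT : X ⊆ S.T) (hXo : X ⊆ Set.Ioo 0 1)
    (hR1 : ∀ m, 1 ≤ m → X ∩ Rset S β m = ∅)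
    (hR0 : X ∩ Rset S β 0 = ∅ ∨ X ⊆ Rset S β 0) :
    ∀ (w : List ℕ) (m : ℕ), (∀ a ∈ w, a < n) →
      (affWord ρ S.t w '' X) ∩ Rset S β m = ∅ ∨
      ((affWord ρ S.t w '' X) ⊆ Rset S β m ∧ m ≤ w.length) := by
  have hn := n3 hρ
  intro w
  induction w with
  | nil =>
    intro m _
    simp only [affWord, Set.image_id]
    cases m with
    | zero =>
      rcases hR0 with h | h
      · exact Or.inl h
      · exact Or.inr ⟨h, le_rfl⟩
    | succ m => exact Or.inl (hR1 (m+1) (by omega))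
  | cons a w ih =>
    intro m hw
    have haw : a < n := hw a (by simp)
    have hw' : ∀ b ∈ w, b < n := fun b hb => hw b (by simp [hb])
    have hopen : affWord ρ S.t w '' X ⊆ Set.Ioo 0 1 := word_Ioo01 hρ S hw' hXo
    rw [image_cons]
    cases m with
    | zero =>
      rcases Nat.lt_or_ge a (n - β) with hc | hc
      · left
        refine sep_lt hρ S (a := a) (b := n - β) hc (by omega) ?_ (Rset_Ici0 hρ S hβn)
        have h' : affWord ρ S.t w '' X ⊆ Set.Iio 1 := fun z hz => (hopen hz).2
        have := aff_img_lt S hρ haw h'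
        simpa using this
      · right
        refine ⟨?_, by omega⟩
        rintro y ⟨z, hz, rfl⟩
        have hzT : z ∈ S.T :=
          word_T_sub hρ S hw' (Set.image_mono hXT hz)
        simp only [Rset, List.replicate, Set.mem_iUnion, List.nil_append, Finset.mem_Ico]
        exact ⟨a, ⟨hc, haw⟩, z, hzT, rfl⟩
    | succ m =>
      by_cases hc : a = n - 1
      · subst hc
        rw [Rset_succ, ← Set.image_inter (aff_inj hρ S (a := n-1) (by omega))]
        rcases ih m hw' with h | ⟨h, hlen⟩
        · left; rw [h, Set.image_empty]
        · right
          exact ⟨Set.image_mono h, by simp; omega⟩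
      · left
        refine sep_gt hρ S (a := a) (b := n-1) (by omega) (by omega) ?_
          (Rset_Ioi hρ S hβn (by omega))
        have h' : affWord ρ S.t w '' X ⊆ Set.Iic 1 :=
          fun z hz => Set.mem_Iic.mpr (le_of_lt (hopen hz).2)
        have := aff_img_le S hρ haw h'
        simpa using this

lemma leftRec {α : ℕ} (hα1 : 1 ≤ α) (hαn : α < n) {X : Set ℝ}
    (hXT : X ⊆ S.T) (hXo : X ⊆ Set.Ioo 0 1)
    (hL1 : ∀ m, 1 ≤ m → X ∩ Lset S α m = ∅)
    (hL0 : X ∩ Lset S α 0 = ∅ ∨ X ⊆ Lset S α 0) :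
    ∀ (w : List ℕ) (m : ℕ), (∀ a ∈ w, a < n) →
      (affWord ρ S.t w '' X) ∩ Lset S α m = ∅ ∨
      ((affWord ρ S.t w '' X) ⊆ Lset S α m ∧ m ≤ w.length) := by
  have hn := n3 hρ
  intro w
  induction w with
  | nil =>
    intro m _
    simp only [affWord, Set.image_id]
    cases m with
    | zero =>
      rcases hL0 with h | h
      · exact Or.inl h
      · exact Or.inr ⟨h, le_rfl⟩
    | succ m => exact Or.inl (hL1 (m+1) (by omega))
  | cons a w ih =>
    intro m hw
    have haw : a < n := hw a (by simp)
    have hw' : ∀ b ∈ w, b < n := fun b hb => hw b (by simp [hb])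
    have hopen : affWord ρ S.t w '' X ⊆ Set.Ioo 0 1 := word_Ioo01 hρ S hw' hXo
    rw [image_cons]
    cases m with
    | zero =>
      rcases Nat.lt_or_ge a α with hc | hc
      · right
        refine ⟨?_, by omega⟩
        rintro y ⟨z, hz, rfl⟩
        have hzT : z ∈ S.T :=
          word_T_sub hρ S hw' (Set.image_mono hXT hz)
        simp only [Lset, List.replicate, Set.mem_iUnion, List.nil_append, Finset.mem_range]
        exact ⟨a, hc, z, hzT, rfl⟩
      · left
        rw [Set.inter_comm]
        refine sep_gt hρ S (a := α - 1) (b := a) (by omega) haw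
          (Lset_le hρ S hα1 hαn) ?_
        have h' : affWord ρ S.t w '' X ⊆ Set.Ioi 0 := fun z hz => (hopen hz).1
        have := aff_img_gt S hρ haw h'
        simpa using this
    | succ m =>
      by_cases hc : a = 0
      · subst hc
        rw [Lset_succ, ← Set.image_inter (aff_inj hρ S (a := 0) (by omega))]
        rcases ih m hw' with h | ⟨h, hlen⟩
        · left; rw [h, Set.image_empty]
        · right
          exact ⟨Set.image_mono h, by simp; omega⟩
      · left
        rw [Set.inter_comm]
        refine sep_lt hρ S (a := 0) (b := a) (by omega) haw
          (Lset_Iio hρ S hαn (by omega)) ?_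
        have h' : affWord ρ S.t w '' X ⊆ Set.Ici 0 :=
          fun z hz => Set.mem_Ici.mpr (le_of_lt (hopen hz).1)
        have := aff_img_ge S hρ haw h'
        simpa using this

end Recs

/-- trichotomy for words. -/
lemma list_tri : ∀ (i j : List ℕ), (∃ w, i = j ++ w) ∨ (∃ w, w ≠ [] ∧ j = i ++ w) ∨
    (∃ c a b i' j', a ≠ b ∧ i = c ++ a :: i' ∧ j = c ++ b :: j') := by
  intro i
  induction i with
  | nil =>
    intro j
    cases j with
    | nil => exact Or.inl ⟨[], rfl⟩
    | cons b j' => exact Or.inr (Or.inl ⟨b :: j', by simp, rfl⟩)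
  | cons a i' ih =>
    intro j
    cases j with
    | nil => exact Or.inl ⟨a :: i', rfl⟩
    | cons b j' =>
      by_cases hab : a = b
      · subst hab
        rcases ih j' with ⟨w, rfl⟩ | ⟨w, hne, rfl⟩ | ⟨c, x, y, u, v, hxy, hi, hj⟩
        · exact Or.inl ⟨w, by simp⟩
        · exact Or.inr (Or.inl ⟨w, hne, by simp⟩)
        · exact Or.inr (Or.inr ⟨a :: c, x, y, u, v, hxy, by simp [hi], by simp [hj]⟩)
      · exact Or.inr (Or.inr ⟨[], a, b, i', j', hab, rfl, rfl⟩)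

end CsetAux
namespace CsetAux
section Main
variable {n : ℕ} {ρ : ℕ → ℝ} (hρ : ContractionVec n ρ) (S : TouchingIFS n ρ)
include hρ

lemma main_c {α β i₀ : ℕ} (hαr : S.alphaRun α) (hβr : S.betaRun β) (hi₀ : S.touch i₀)
    (hρ1n : ρ (n - 1) ≤ ρ 0) {τ : ℕ → ℕ} (hτ : tauSpec ρ n τ)
    (w : List ℕ) (hw : ∀ a ∈ w, a < n) {k ℓ : ℕ} (hk : 1 ≤ k) (hℓ : 1 ≤ ℓ)
    (hlen : ℓ < w.length + k) :
    (affWord ρ S.t w '' Cset S α β i₀ τ k) ∩ Cset S α β i₀ τ ℓ = ∅ ∨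
    affWord ρ S.t w '' Cset S α β i₀ τ k ⊆ Cset S α β i₀ τ ℓ := by
  have hn := n3 hρ
  have hα1 := hαr.1
  have hαn := hαr.2.1
  have hβ1 := hβr.1
  have hβn := hβr.2.1
  have hi₀n := hi₀.1
  have htk : 1 ≤ τ k := (hτ k hk).1
  have htl : 1 ≤ τ ℓ := (hτ ℓ hℓ).1
  cases w with
  | nil =>
    right
    have hlk : ℓ < k := by simpa using hlen
    simpa [affWord, Set.image_id] using
      Cset_mono hρ S hα1 hαn hβ1 hβn hτ hρ1n hℓ hlk
  | cons a w' =>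
    have haw : a < n := hw a (by simp)
    have hw' : ∀ b ∈ w', b < n := fun b hb => hw b (by simp [hb])
    have hCo : Cset S α β i₀ τ k ⊆ Set.Ioo 0 1 := Cset_Ioo hρ S hi₀n hαn hβn
    have hCT : Cset S α β i₀ τ k ⊆ S.T := Cset_T hρ S hi₀n hαn
    have hWo : affWord ρ S.t w' '' Cset S α β i₀ τ k ⊆ Set.Ioo 0 1 :=
      word_Ioo01 hρ S hw' hCo
    have hWlt : affWord ρ S.t w' '' Cset S α β i₀ τ k ⊆ Set.Iio 1 :=
      fun z hz => (hWo hz).2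
    have hWgt : affWord ρ S.t w' '' Cset S α β i₀ τ k ⊆ Set.Ioi 0 :=
      fun z hz => (hWo hz).1
    rw [image_cons, Cset_eq S α β i₀ τ ℓ, Set.inter_union_distrib_left]
    by_cases ha1 : a = i₀
    · subst ha1
      have h2 : (affMap ρ S.t a '' (affWord ρ S.t w' '' Cset S α β a τ k)) ∩
          (affMap ρ S.t (a+1) '' Lset S α (τ ℓ)) = ∅ := by
        refine sep_lt hρ S (a := a) (b := a+1) (by omega) hi₀n ?_ ?_
        · have := aff_img_lt S hρ haw hWlt
          simpa using this
        · have := aff_img_ge S hρ (a := a+1) hi₀n (Lset_nonneg hρ S hαn (m := τ ℓ))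
          simpa using this
      rcases rightRec hρ S hβ1 hβn hCT hCo
          (fun m hm => Cset_Rset_disj hρ S hi₀n hαn hβn htk hm)
          (Cset_Rset0 hρ S hi₀ hαn hβr htk) w' ℓ hw' with h | ⟨h, -⟩
      · left
        rw [h2, Set.union_empty, ← Set.image_inter (aff_inj hρ S haw), h, Set.image_empty]
      · right
        exact subset_trans (Set.image_mono h) Set.subset_union_left
    · by_cases ha2 : a = i₀ + 1
      · subst ha2
        have h1 : (affMap ρ S.t (i₀+1) '' (affWord ρ S.t w' '' Cset S α β i₀ τ k)) ∩
            (affMap ρ S.t i₀ '' Rset S β ℓ) = ∅ := by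
          rw [Set.inter_comm]
          refine sep_gt hρ S (a := i₀) (b := i₀+1) (by omega) hi₀n ?_ ?_
          · have := aff_img_le S hρ (a := i₀) (by omega) (Rset_le1 hρ S hβn (m := ℓ))
            simpa using this
          · have := aff_img_gt S hρ (a := i₀+1) hi₀n hWgt
            simpa using this
        rcases leftRec hρ S hα1 hαn hCT hCo
            (fun m hm => Cset_Lset_disj hρ S hi₀n hαn hβn hk hm)
            (Cset_Lset0 hρ S hi₀ hαr hβn hk) w' (τ ℓ) hw' with h | ⟨h, -⟩
        · left
          rw [h1, Set.empty_union, ← Set.image_inter (aff_inj hρ S haw), h, Set.image_empty]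
        · right
          exact subset_trans (Set.image_mono h) Set.subset_union_right
      · left
        have hXoo : affMap ρ S.t a '' (affWord ρ S.t w' '' Cset S α β i₀ τ k) ⊆
            Set.Ioo (affMap ρ S.t a 0) (affMap ρ S.t a 1) := aff_Ioo hρ S haw hWo
        have h1 : (affMap ρ S.t a '' (affWord ρ S.t w' '' Cset S α β i₀ τ k)) ∩
            (affMap ρ S.t i₀ '' Rset S β ℓ) = ∅ := by
          refine sep_ne hρ S ha1 haw (by omega) hXoo ?_
          refine aff_img_Icc S hρ (by omega) ?_
          exact fun z hz => ⟨le_of_lt (Rset_pos hρ S hβn hz), Rset_le1 hρ S hβn hz⟩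
        have h2 : (affMap ρ S.t a '' (affWord ρ S.t w' '' Cset S α β i₀ τ k)) ∩
            (affMap ρ S.t (i₀+1) '' Lset S α (τ ℓ)) = ∅ := by
          refine sep_ne hρ S ha2 haw hi₀n hXoo ?_
          refine aff_img_Icc S hρ hi₀n ?_
          exact fun z hz => ⟨Lset_nonneg hρ S hαn hz, le_of_lt (Lset_lt1 hρ S hαn hz)⟩
        rw [h1, h2, Set.union_empty]

lemma main_b {α β i₀ : ℕ} (hαr : S.alphaRun α) (hβr : S.betaRun β) (hi₀ : S.touch i₀)
    (hρ1n : ρ (n - 1) ≤ ρ 0) {τ : ℕ → ℕ} (hτ : tauSpec ρ n τ)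
    (w : List ℕ) (hw : ∀ a ∈ w, a < n) (hwne : w ≠ []) {k ℓ : ℕ} (hk : 1 ≤ k) (hℓ : 1 ≤ ℓ)
    (hlen : w.length + ℓ < k) :
    (affWord ρ S.t w '' Cset S α β i₀ τ ℓ) ∩ Cset S α β i₀ τ k = ∅ := by
  have hn := n3 hρ
  have hα1 := hαr.1
  have hαn := hαr.2.1
  have hβ1 := hβr.1
  have hβn := hβr.2.1
  have hi₀n := hi₀.1
  have htk : 1 ≤ τ k := (hτ k hk).1
  have htl : 1 ≤ τ ℓ := (hτ ℓ hℓ).1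
  cases w with
  | nil => exact absurd rfl hwne
  | cons a w' =>
    have haw : a < n := hw a (by simp)
    have hw' : ∀ b ∈ w', b < n := fun b hb => hw b (by simp [hb])
    have hCo : Cset S α β i₀ τ ℓ ⊆ Set.Ioo 0 1 := Cset_Ioo hρ S hi₀n hαn hβn
    have hCT : Cset S α β i₀ τ ℓ ⊆ S.T := Cset_T hρ S hi₀n hαn
    have hWo : affWord ρ S.t w' '' Cset S α β i₀ τ ℓ ⊆ Set.Ioo 0 1 :=
      word_Ioo01 hρ S hw' hCo
    have hWlt : affWord ρ S.t w' '' Cset S α β i₀ τ ℓ ⊆ Set.Iio 1 :=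
      fun z hz => (hWo hz).2
    have hWgt : affWord ρ S.t w' '' Cset S α β i₀ τ ℓ ⊆ Set.Ioi 0 :=
      fun z hz => (hWo hz).1
    have hlen' : w'.length + 1 + ℓ ≤ k := by
      simp only [List.length_cons] at hlen
      omega
    rw [image_cons, Cset_eq S α β i₀ τ k, Set.inter_union_distrib_left]
    by_cases ha1 : a = i₀
    · subst ha1
      have h2 : (affMap ρ S.t a '' (affWord ρ S.t w' '' Cset S α β a τ ℓ)) ∩
          (affMap ρ S.t (a+1) '' Lset S α (τ k)) = ∅ := by
        refine sep_lt hρ S (a := a) (b := a+1) (by omega) hi₀n ?_ ?_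
        · have := aff_img_lt S hρ haw hWlt
          simpa using this
        · have := aff_img_ge S hρ (a := a+1) hi₀n (Lset_nonneg hρ S hαn (m := τ k))
          simpa using this
      rcases rightRec hρ S hβ1 hβn hCT hCo
          (fun m hm => Cset_Rset_disj hρ S hi₀n hαn hβn htl hm)
          (Cset_Rset0 hρ S hi₀ hαn hβr htl) w' k hw' with h | ⟨-, hcon⟩
      · rw [h2, Set.union_empty, ← Set.image_inter (aff_inj hρ S haw), h, Set.image_empty]
      · omega
    · by_cases ha2 : a = i₀ + 1
      · subst ha2
        have h1 : (affMap ρ S.t (i₀+1) '' (affWord ρ S.t w' '' Cset S α β i₀ τ ℓ)) ∩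
            (affMap ρ S.t i₀ '' Rset S β k) = ∅ := by
          rw [Set.inter_comm]
          refine sep_gt hρ S (a := i₀) (b := i₀+1) (by omega) hi₀n ?_ ?_
          · have := aff_img_le S hρ (a := i₀) (by omega) (Rset_le1 hρ S hβn (m := k))
            simpa using this
          · have := aff_img_gt S hρ (a := i₀+1) hi₀n hWgt
            simpa using this
        rcases leftRec hρ S hα1 hαn hCT hCo
            (fun m hm => Cset_Lset_disj hρ S hi₀n hαn hβn hℓ hm)
            (Cset_Lset0 hρ S hi₀ hαr hβn hℓ) w' (τ k) hw' with h | ⟨-, hcon⟩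
        · rw [h1, Set.empty_union, ← Set.image_inter (aff_inj hρ S haw), h, Set.image_empty]
        · have hkτ : k ≤ τ k := le_tau hρ hτ hρ1n hk
          omega
      · have hXoo : affMap ρ S.t a '' (affWord ρ S.t w' '' Cset S α β i₀ τ ℓ) ⊆
            Set.Ioo (affMap ρ S.t a 0) (affMap ρ S.t a 1) := aff_Ioo hρ S haw hWo
        have h1 : (affMap ρ S.t a '' (affWord ρ S.t w' '' Cset S α β i₀ τ ℓ)) ∩
            (affMap ρ S.t i₀ '' Rset S β k) = ∅ := by
          refine sep_ne hρ S ha1 haw (by omega) hXoo ?_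
          refine aff_img_Icc S hρ (by omega) ?_
          exact fun z hz => ⟨le_of_lt (Rset_pos hρ S hβn hz), Rset_le1 hρ S hβn hz⟩
        have h2 : (affMap ρ S.t a '' (affWord ρ S.t w' '' Cset S α β i₀ τ ℓ)) ∩
            (affMap ρ S.t (i₀+1) '' Lset S α (τ k)) = ∅ := by
          refine sep_ne hρ S ha2 haw hi₀n hXoo ?_
          refine aff_img_Icc S hρ hi₀n ?_
          exact fun z hz => ⟨Lset_nonneg hρ S hαn hz, le_of_lt (Lset_lt1 hρ S hαn hz)⟩
        rw [h1, h2, Set.union_empty]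

end Main
end CsetAux
/-- a set of `𝒞_u` is either disjoint from or contained in a set of `𝒞_v`
when `u > v`. -/
theorem Cset_nested_or_disjoint {n : ℕ} {ρ : ℕ → ℝ} (hρ : ContractionVec n ρ)
    (S : TouchingIFS n ρ) (α β i₀ : ℕ)
    (hα : S.alphaRun α) (hβ : S.betaRun β) (hi₀ : S.touch i₀)
    (hρ1n : ρ (n - 1) ≤ ρ 0) (τ : ℕ → ℕ) (hτ : tauSpec ρ n τ)
    (i j : List ℕ) (hi : ∀ a ∈ i, a < n) (hj : ∀ a ∈ j, a < n)
    (k ℓ : ℕ) (hk : 1 ≤ k) (hℓ : 1 ≤ ℓ)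
    (hlen : j.length + ℓ < i.length + k) :
    (affWord ρ S.t i '' Cset S α β i₀ τ k) ∩ (affWord ρ S.t j '' Cset S α β i₀ τ ℓ) = ∅ ∨
    affWord ρ S.t i '' Cset S α β i₀ τ k ⊆ affWord ρ S.t j '' Cset S α β i₀ τ ℓ := by
  open CsetAux in
  rcases CsetAux.list_tri i j with ⟨w, rfl⟩ | ⟨w, hwne, rfl⟩ | ⟨c, a, b, i', j', hab, rfl, rfl⟩
  · -- j is a prefix of i
    have hjw : ∀ x ∈ j, x < n := fun x hx => hi x (by simp [hx])
    have hww : ∀ x ∈ w, x < n := fun x hx => hi x (by simp [hx])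
    have hlen' : ℓ < w.length + k := by
      simp only [List.length_append] at hlen
      omega
    rcases CsetAux.main_c hρ S hα hβ hi₀ hρ1n hτ w hww hk hℓ hlen' with h | h
    · left
      rw [CsetAux.image_append S j w, ← Set.image_inter (CsetAux.word_inj hρ S hjw), h,
        Set.image_empty]
    · right
      rw [CsetAux.image_append S j w]
      exact Set.image_mono h
  · -- i is a proper prefix of j
    left
    have hiw : ∀ x ∈ i, x < n := fun x hx => hj x (by simp [hx])
    have hww : ∀ x ∈ w, x < n := fun x hx => hj x (by simp [hx])
    have hlen' : w.length + ℓ < k := by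
      simp only [List.length_append] at hlen
      omega
    have h := CsetAux.main_b hρ S hα hβ hi₀ hρ1n hτ w hww hwne hk hℓ hlen'
    rw [CsetAux.image_append S i w, ← Set.image_inter (CsetAux.word_inj hρ S hiw),
      Set.inter_comm, h, Set.image_empty]
  · -- the words diverge
    left
    have hcn : ∀ x ∈ c, x < n := fun x hx => hi x (by simp [hx])
    have han : a < n := hi a (by simp)
    have hbn : b < n := hj b (by simp)
    have hi'n : ∀ x ∈ i', x < n := fun x hx => hi x (by simp [hx])
    have hj'n : ∀ x ∈ j', x < n := fun x hx => hj x (by simp [hx])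
    have hi₀n := hi₀.1
    have hαn := hα.2.1
    have hβn := hβ.2.1
    have hCko : Cset S α β i₀ τ k ⊆ Set.Ioo 0 1 := CsetAux.Cset_Ioo hρ S hi₀n hαn hβn
    have hClo : Cset S α β i₀ τ ℓ ⊆ Set.Ioo 0 1 := CsetAux.Cset_Ioo hρ S hi₀n hαn hβn
    have h1 : affWord ρ S.t (a :: i') '' Cset S α β i₀ τ k ⊆
        affMap ρ S.t a '' Set.Ioo 0 1 := by
      rw [CsetAux.image_cons]
      exact Set.image_mono (CsetAux.word_Ioo01 hρ S hi'n hCko)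
    have h2 : affWord ρ S.t (b :: j') '' Cset S α β i₀ τ ℓ ⊆
        affMap ρ S.t b '' Set.Ioo 0 1 := by
      rw [CsetAux.image_cons]
      exact Set.image_mono (CsetAux.word_Ioo01 hρ S hj'n hClo)
    have hsep : (affMap ρ S.t a '' Set.Ioo 0 1) ∩ (affMap ρ S.t b '' Set.Ioo 0 1) = ∅ := by
      refine CsetAux.sep_ne hρ S hab han hbn (CsetAux.aff_Ioo hρ S han Set.Subset.rfl) ?_
      intro y hy
      obtain ⟨hy1, hy2⟩ := CsetAux.aff_Ioo hρ S hbn Set.Subset.rfl hy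
      exact ⟨le_of_lt hy1, le_of_lt hy2⟩
    have hsub : (affWord ρ S.t (c ++ a :: i') '' Cset S α β i₀ τ k) ∩
        (affWord ρ S.t (c ++ b :: j') '' Cset S α β i₀ τ ℓ) ⊆ ∅ := by
      rw [CsetAux.image_append S c (a :: i'), CsetAux.image_append S c (b :: j')]
      refine subset_trans (Set.inter_subset_inter (Set.image_mono h1) (Set.image_mono h2)) ?_
      rw [← Set.image_inter (CsetAux.word_inj hρ S hcn), hsep, Set.image_empty]
    exact Set.subset_empty_iff.mp hsub
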